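/- For every numerical semigroup Λ with genus g and enumeration λ, the partial genus satisfies g(i) = λ_i − i ≥ i for all 0 ≤ i ≤ g. Equivalently, λ_i ≥ 2i for all i ≤ g. -/

import Mathlib

/-- For every numerical semigroup of genus g, the partial genus
satisfies f i - i ≥ i for all 0 ≤ i ≤ g; equivalently f i ≥ 2i for i ≤ g. -/
theorem partial_genus_ge
    (Λ : Set ℕ) (h0 : 0 ∈ Λ)
    (hadd : ∀ a b, a ∈ Λ → b ∈ Λ → a + b ∈ Λ)
    (hfin : Λᶜ.Finite)
    (g : ℕ) (hg : Λᶜ.ncard = g)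
    (f : ℕ → ℕ) (hmono : StrictMono f) (hrange : Set.range f = Λ) :
    ∀ i : ℕ, i ≤ g → i ≤ f i - i ∧ 2 * i ≤ f i := by
  classical
  intro i hi
  suffices h : 2 * i ≤ f i by exact ⟨by omega, h⟩
  rcases Nat.eq_zero_or_pos i with hi0 | hip
  · simp [hi0]
  have hfmem : ∀ j, f j ∈ Λ := fun j => hrange ▸ Set.mem_range_self j
  have hsurj : ∀ n ∈ Λ, ∃ j, f j = n := by
    intro n hn; rw [← hrange] at hn; exact hn
  set G := hfin.toFinset with hGdef
  have hGcard : G.card = g := by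
    rw [Set.ncard_eq_toFinset_card _ hfin] at hg; exact hg
  have hGmem : ∀ x, x ∈ G ↔ x ∉ Λ := fun x => by simp [hGdef]
  have hig : i - 1 < g := by omega
  set e := G.orderIsoOfFin hGcard with he
  set ℓ := (e ⟨i - 1, hig⟩ : ℕ) with hℓ
  have hℓG : ℓ ∈ G := (e ⟨i - 1, hig⟩).2
  have hℓΛ : ℓ ∉ Λ := (hGmem ℓ).1 hℓG
  -- a total enumeration of gaps
  set F : ℕ → ℕ := fun j => if h : j < g then (e ⟨j, h⟩ : ℕ) else 0 with hF
  have hFval : ∀ j (h : j < g), F j = (e ⟨j, h⟩ : ℕ) := by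
    intro j h; simp [hF, h]
  -- exactly i gaps are ≤ ℓ
  have hBcard : (G.filter (fun x => x ≤ ℓ)).card = i := by
    have : (Finset.range i).card = (G.filter (fun x => x ≤ ℓ)).card := by
      apply Finset.card_bij (fun j _ => F j)
      · intro j hj
        have hj' := Finset.mem_range.mp hj
        have hjg : j < g := by omega
        rw [hFval j hjg]
        refine Finset.mem_filter.mpr ⟨(e ⟨j, hjg⟩).2, ?_⟩
        have : e ⟨j, hjg⟩ ≤ e ⟨i - 1, hig⟩ :=
          e.monotone (Fin.mk_le_mk.mpr (by omega))
        exact Subtype.coe_le_coe.mpr this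
      · intro a ha b hb hab
        have hag : a < g := by have := Finset.mem_range.mp ha; omega
        have hbg : b < g := by have := Finset.mem_range.mp hb; omega
        rw [hFval a hag, hFval b hbg] at hab
        have := e.injective (Subtype.coe_injective hab)
        simpa using congrArg Fin.val this
      · intro x hx
        rcases Finset.mem_filter.mp hx with ⟨hxG, hxℓ⟩
        set j := e.symm ⟨x, hxG⟩ with hj
        have hex : (e j : ℕ) = x := by simp [hj]
        have hje : e j ≤ e ⟨i - 1, hig⟩ := by
          rw [← Subtype.coe_le_coe, hex]; exact hxℓ
        have hjle : (j : ℕ) ≤ i - 1 := Fin.mk_le_mk.mp (e.le_iff_le.mp hje)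
        refine ⟨(j : ℕ), Finset.mem_range.mpr (by omega), ?_⟩
        rw [hFval (j : ℕ) j.2]
        simpa using hex
    simpa using this.symm
  set B := (Finset.range (ℓ + 1)).filter (fun x => x ∉ Λ) with hBdef
  have hBeq : B = G.filter (fun x => x ≤ ℓ) := by
    ext x
    simp only [hBdef, Finset.mem_filter, Finset.mem_range, hGmem, Nat.lt_succ_iff]
    tauto
  have hBcard' : B.card = i := by rw [hBeq]; exact hBcard
  set A := (Finset.range (ℓ + 1)).filter (fun x => x ∈ Λ) with hAdef
  have hAB : A.card ≤ B.card := by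
    apply Finset.card_le_card_of_injOn (fun a => ℓ - a)
    · intro a ha
      rcases Finset.mem_filter.mp ha with ⟨haR, haΛ⟩
      have haℓ : a ≤ ℓ := Nat.lt_succ_iff.mp (Finset.mem_range.mp haR)
      refine Finset.mem_filter.mpr ⟨Finset.mem_range.mpr (by dsimp only; omega), ?_⟩
      intro hcon
      exact hℓΛ (by have := hadd a (ℓ - a) haΛ hcon; rwa [Nat.add_sub_cancel' haℓ] at this)
    · intro a ha b hb hab
      have haℓ : a ≤ ℓ := Nat.lt_succ_iff.mp (Finset.mem_range.mp (Finset.mem_filter.mp ha).1)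
      have hbℓ : b ≤ ℓ := Nat.lt_succ_iff.mp (Finset.mem_range.mp (Finset.mem_filter.mp hb).1)
      simp only at hab; omega
  -- ℓ < f i
  have hℓfi : ℓ < f i := by
    by_contra hcon
    push_neg at hcon
    have : (Finset.range (i + 1)).card ≤ A.card := by
      apply Finset.card_le_card_of_injOn (fun j => f j)
      · intro j hj
        have hj' := Finset.mem_range.mp hj
        refine Finset.mem_filter.mpr ⟨Finset.mem_range.mpr ?_, hfmem j⟩
        have : f j ≤ f i := hmono.monotone (by omega)
        dsimp only; omega
      · intro a _ b _ hab; exact hmono.injective hab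
    simp only [Finset.card_range] at this
    omega
  -- exactly i elements of Λ are < f i
  have hAcount : ((Finset.range (f i)).filter (fun x => x ∈ Λ)).card = i := by
    have : (Finset.range i).card = ((Finset.range (f i)).filter (fun x => x ∈ Λ)).card := by
      apply Finset.card_bij (fun j _ => f j)
      · intro j hj
        exact Finset.mem_filter.mpr ⟨Finset.mem_range.mpr (hmono (Finset.mem_range.mp hj)),
          hfmem j⟩
      · intro a _ b _ hab; exact hmono.injective hab
      · intro x hx
        rcases Finset.mem_filter.mp hx with ⟨hxR, hxΛ⟩
        rcases hsurj x hxΛ with ⟨j, hj⟩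
        refine ⟨j, Finset.mem_range.mpr ?_, hj⟩
        have : f j < f i := by rw [hj]; exact Finset.mem_range.mp hxR
        exact hmono.lt_iff_lt.mp this
    simpa using this.symm
  -- at least i gaps are < f i
  have hsub : B ⊆ (Finset.range (f i)).filter (fun x => x ∉ Λ) := by
    intro x hx
    rcases Finset.mem_filter.mp hx with ⟨hxR, hxΛ⟩
    have : x ≤ ℓ := Nat.lt_succ_iff.mp (Finset.mem_range.mp hxR)
    exact Finset.mem_filter.mpr ⟨Finset.mem_range.mpr (by omega), hxΛ⟩
  have hgaps := Finset.card_le_card hsub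
  have hsplit : ((Finset.range (f i)).filter (fun x => x ∈ Λ)).card
      + ((Finset.range (f i)).filter (fun x => x ∉ Λ)).card = f i := by
    rw [Finset.card_filter_add_card_filter_not, Finset.card_range]
  omega
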